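/- arXiv:2404.16920 — 4 statements merged into one kernel-verified Lean document; each statement's English description precedes it below -/
import Mathlib

section
/- Let X be a finite type, let K be a natural number, let T ≥ 2 be a natural number, and for each x ∈ X let C_x : ℕ → ℕ be a nondecreasing function with ∑_{x ∈ X} C_x(K) ≤ T. Then ∑_{x ∈ X} |{k ∈ {1, …, K} : C_x(k−1) ≥ 1 and C_x(k) > 2·C_x(k−1)}| ≤ |X| · log₂ T, where the left-hand side is interpreted as a real number. -/
open Finset

lemma pow_filter_le (f : ℕ → ℕ) (hf : Monotone f) :
    ∀ K : ℕ, 2 ^ ((Finset.Icc 1 K).filter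
        (fun k => 1 ≤ f (k - 1) ∧ f k > 2 * f (k - 1))).card ≤ max 1 (f K) := by
  intro K
  induction K with
  | zero => simp
  | succ n ih =>
    have hins : Finset.Icc 1 (n + 1) = insert (n + 1) (Finset.Icc 1 n) := by
      rw [show n + 1 = n + 1 from rfl]; ext a; simp; omega
    have hnot : (n + 1) ∉ Finset.Icc 1 n := by simp
    by_cases hP : 1 ≤ f (n + 1 - 1) ∧ f (n + 1) > 2 * f (n + 1 - 1)
    · rw [hins, Finset.filter_insert, if_pos hP,
        Finset.card_insert_of_notMem (fun h => hnot (Finset.mem_of_mem_filter _ h))]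
      have h1 : max 1 (f n) = f n := by
        have := hP.1; simp at this ⊢; omega
      have : 2 ^ (((Finset.Icc 1 n).filter
          (fun k => 1 ≤ f (k - 1) ∧ f k > 2 * f (k - 1))).card + 1)
          ≤ 2 * f n := by
        rw [pow_succ, mul_comm]
        have := ih
        rw [h1] at this
        omega
      have h2 : 2 * f n ≤ f (n + 1) := by
        have := hP.2; simp at this; omega
      calc _ ≤ 2 * f n := this
        _ ≤ max 1 (f (n + 1)) := le_trans h2 (le_max_right _ _)
    · rw [hins, Finset.filter_insert, if_neg hP]
      exact le_trans ih (max_le_max le_rfl (hf (Nat.le_succ n)))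

/-- Macro-episode count bound: with `C x` nondecreasing and `∑ x, C x K ≤ T`,
the total number of doubling episodes is at most `|X| · log₂ T`. -/
theorem macro_episode_total_bound (X : Type*) [Fintype X] (K T : ℕ) (hT : 2 ≤ T)
    (C : X → ℕ → ℕ) (hC : ∀ x, Monotone (C x))
    (hsum : ∑ x, C x K ≤ T) :
    (∑ x, ((((Finset.Icc 1 K).filter
        (fun k => 1 ≤ C x (k - 1) ∧ C x k > 2 * C x (k - 1))).card : ℝ)))
      ≤ (Fintype.card X : ℝ) * Real.logb 2 T := by
  have hlog : ∀ x : X, ((((Finset.Icc 1 K).filter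
      (fun k => 1 ≤ C x (k - 1) ∧ C x k > 2 * C x (k - 1))).card : ℝ))
      ≤ Real.logb 2 T := by
    intro x
    set m := ((Finset.Icc 1 K).filter
      (fun k => 1 ≤ C x (k - 1) ∧ C x k > 2 * C x (k - 1))).card with hm
    have h1 : 2 ^ m ≤ max 1 (C x K) := pow_filter_le (C x) (hC x) K
    have h2 : C x K ≤ T := le_trans (Finset.single_le_sum (f := fun x => C x K)
      (fun _ _ => Nat.zero_le _) (Finset.mem_univ x)) hsum
    have h3 : 2 ^ m ≤ T := le_trans h1 (max_le (by omega) h2)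
    have h4 : ((2 : ℝ) ^ m) ≤ (T : ℝ) := by exact_mod_cast h3
    have h5 : Real.logb 2 ((2 : ℝ) ^ m) ≤ Real.logb 2 T :=
      Real.logb_le_logb_of_le (by norm_num) (by positivity) h4
    rwa [Real.logb_pow, Real.logb_self_eq_one one_lt_two, mul_one] at h5
  calc _ ≤ ∑ _x : X, Real.logb 2 T := Finset.sum_le_sum (fun x _ => hlog x)
    _ = (Fintype.card X : ℝ) * Real.logb 2 T := by
        rw [Finset.sum_const, Finset.card_univ, nsmul_eq_mul]
end

section
/- Let X be a finite type, let T be a natural number, and let x : {1, …, T} → X be any sequence. For each t ∈ {1, …, T} let N_t = |{s ∈ {1, …, t−1} : x_s = x_t}| be the number of earlier occurrences of the value x_t. Then ∑_{t=1}^{T} 1/√(max(1, N_t)) ≤ 3·√(|X| · T). -/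
open Finset

private lemma mysum_step (m : ℕ) :
    (1:ℝ)/Real.sqrt (m+1) ≤ 2*(Real.sqrt (m+1) - Real.sqrt m) := by
  have ha : (0:ℝ) < Real.sqrt (m+1) := Real.sqrt_pos.mpr (by positivity)
  rw [div_le_iff₀ ha]
  nlinarith [sq_nonneg (Real.sqrt (m+1:ℝ) - Real.sqrt m),
    Real.sq_sqrt (show (0:ℝ) ≤ m+1 by positivity),
    Real.sq_sqrt (show (0:ℝ) ≤ m by positivity),
    Real.sqrt_nonneg (m:ℝ)]

private lemma mysum_aux (n : ℕ) :
    ∑ k ∈ Finset.range (n+1), (1:ℝ)/Real.sqrt ((max 1 k : ℕ)) ≤ 1 + 2 * Real.sqrt n := by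
  induction n with
  | zero => simp
  | succ m ih =>
    rw [Finset.sum_range_succ]
    have h1 : ((max 1 (m+1) : ℕ) : ℝ) = ((m:ℝ)+1) := by
      have : max 1 (m+1) = m+1 := by omega
      rw [this]; push_cast; ring
    rw [h1, show ((m+1:ℕ):ℝ) = (m:ℝ)+1 by push_cast; ring]
    have := mysum_step m
    linarith

private lemma mysum_bound (n : ℕ) :
    ∑ k ∈ Finset.range n, (1:ℝ)/Real.sqrt ((max 1 k : ℕ)) ≤ 3 * Real.sqrt n := by
  cases n with
  | zero => simp
  | succ m =>
    have h := mysum_aux m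
    have hm : (0:ℝ) ≤ (m:ℝ) := Nat.cast_nonneg m
    have h2 : Real.sqrt (m:ℝ) ≤ Real.sqrt ((m:ℝ)+1) := Real.sqrt_le_sqrt (by linarith)
    have h3 : (1:ℝ) ≤ Real.sqrt ((m:ℝ)+1) := by
      nlinarith [Real.sq_sqrt (show (0:ℝ) ≤ (m:ℝ)+1 by linarith),
        Real.sqrt_nonneg ((m:ℝ)+1)]
    rw [show ((m+1:ℕ):ℝ) = (m:ℝ)+1 by push_cast; ring]
    linarith

/-- Visit-count summation bound: for any sequence `x : {1,…,T} → X` with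
`N t` the number of earlier occurrences of the value `x t`,
`∑_{t=1}^T 1/√(max 1 (N t)) ≤ 3 √(|X| T)`. -/
theorem visit_count_summation_bound (X : Type*) [Fintype X] [DecidableEq X]
    (T : ℕ) (x : ℕ → X) :
    ∑ t ∈ Finset.Icc 1 T,
        (1 : ℝ) / Real.sqrt ((max 1
          (((Finset.Icc 1 (t - 1)).filter (fun s => x s = x t)).card) : ℕ))
      ≤ 3 * Real.sqrt ((Fintype.card X : ℝ) * T) := by
  classical
  set f : ℕ → ℝ := fun k => (1:ℝ)/Real.sqrt ((max 1 k : ℕ)) with hf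
  have hfnonneg : ∀ k, 0 ≤ f k := fun k => by positivity
  -- fiberwise decomposition
  rw [← Finset.sum_fiberwise (Finset.Icc 1 T) x
    (fun t => f (((Finset.Icc 1 (t - 1)).filter (fun s => x s = x t)).card))]
  -- bound each fiber
  have hfiber : ∀ a : X,
      ∑ t ∈ (Finset.Icc 1 T).filter (fun t => x t = a),
        f (((Finset.Icc 1 (t - 1)).filter (fun s => x s = x t)).card)
      ≤ 3 * Real.sqrt (((Finset.Icc 1 T).filter (fun t => x t = a)).card) := by
    intro a
    set s := (Finset.Icc 1 T).filter (fun t => x t = a) with hs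
    set r : ℕ → ℕ := fun t => (s.filter (fun u => u < t)).card with hr
    have hcount : ∀ t ∈ s, ((Finset.Icc 1 (t - 1)).filter (fun u => x u = x t)).card = r t := by
      intro t ht
      simp only [hs, Finset.mem_filter, Finset.mem_Icc] at ht
      congr 1
      ext u
      simp only [hs, hr, Finset.mem_filter, Finset.mem_Icc, ht.2]
      constructor
      · rintro ⟨⟨h1, h2⟩, h3⟩; exact ⟨⟨⟨h1, by omega⟩, h3⟩, by omega⟩
      · rintro ⟨⟨⟨h1, h2⟩, h3⟩, h4⟩; exact ⟨⟨h1, by omega⟩, h3⟩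
    have hlt : ∀ t ∈ s, r t < s.card := by
      intro t ht
      apply Finset.card_lt_card
      constructor
      · exact Finset.filter_subset _ _
      · intro hsub
        have := hsub ht
        simp at this
    have hmono : ∀ t t', t ∈ s → t' ∈ s → t < t' → r t < r t' := by
      intro t t' ht ht' hlt'
      apply Finset.card_lt_card
      constructor
      · intro u hu
        simp only [Finset.mem_filter] at hu ⊢
        exact ⟨hu.1, by omega⟩
      · intro hsub
        have := hsub (Finset.mem_filter.mpr ⟨ht, hlt'⟩)
        simp only [Finset.mem_filter] at this
        omega
    have hinj : Set.InjOn r s := by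
      intro t ht t' ht' heq
      rcases lt_trichotomy t t' with h | h | h
      · exact absurd heq (by have := hmono t t' (Finset.mem_coe.mp ht) (Finset.mem_coe.mp ht') h; omega)
      · exact h
      · exact absurd heq (by have := hmono t' t (Finset.mem_coe.mp ht') (Finset.mem_coe.mp ht) h; omega)
    calc ∑ t ∈ s, f (((Finset.Icc 1 (t - 1)).filter (fun u => x u = x t)).card)
        = ∑ t ∈ s, f (r t) := Finset.sum_congr rfl (fun t ht => by rw [hcount t ht])
      _ = ∑ k ∈ s.image r, f k := (Finset.sum_image (fun a ha b hb h => hinj ha hb h)).symm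
      _ ≤ ∑ k ∈ Finset.range s.card, f k := by
          apply Finset.sum_le_sum_of_subset_of_nonneg
          · intro k hk
            obtain ⟨t, ht, rfl⟩ := Finset.mem_image.mp hk
            exact Finset.mem_range.mpr (hlt t ht)
          · intro k _ _; exact hfnonneg k
      _ ≤ 3 * Real.sqrt s.card := mysum_bound s.card
  calc ∑ a : X, ∑ t ∈ (Finset.Icc 1 T).filter (fun t => x t = a),
        f (((Finset.Icc 1 (t - 1)).filter (fun s => x s = x t)).card)
      ≤ ∑ a : X, 3 * Real.sqrt (((Finset.Icc 1 T).filter (fun t => x t = a)).card) :=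
        Finset.sum_le_sum (fun a _ => hfiber a)
    _ = 3 * ∑ a : X, Real.sqrt (((Finset.Icc 1 T).filter (fun t => x t = a)).card) := by
        rw [Finset.mul_sum]
    _ ≤ 3 * Real.sqrt ((Fintype.card X : ℝ) * T) := by
        gcongr
        have hcard : ∑ a : X, (((Finset.Icc 1 T).filter (fun t => x t = a)).card : ℝ) = T := by
          rw [← Nat.cast_sum]
          norm_cast
          rw [← Finset.card_eq_sum_card_fiberwise (fun t _ => Finset.mem_univ (x t))]
          simp
        have hcs : (∑ a : X, Real.sqrt (((Finset.Icc 1 T).filter (fun t => x t = a)).card)) ^ 2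
            ≤ (Fintype.card X : ℝ) * T := by
          calc (∑ a : X, Real.sqrt (((Finset.Icc 1 T).filter (fun t => x t = a)).card)) ^ 2
              ≤ (Finset.univ : Finset X).card *
                ∑ a : X, Real.sqrt (((Finset.Icc 1 T).filter (fun t => x t = a)).card) ^ 2 :=
                sq_sum_le_card_mul_sum_sq
            _ = (Fintype.card X : ℝ) * T := by
                rw [Finset.card_univ]
                congr 1
                rw [← hcard]
                exact Finset.sum_congr rfl (fun a _ => Real.sq_sqrt (by positivity))
        have hnn : 0 ≤ ∑ a : X, Real.sqrt (((Finset.Icc 1 T).filter (fun t => x t = a)).card) :=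
          Finset.sum_nonneg (fun a _ => Real.sqrt_nonneg _)
        calc ∑ a : X, Real.sqrt (((Finset.Icc 1 T).filter (fun t => x t = a)).card)
            = Real.sqrt ((∑ a : X, Real.sqrt (((Finset.Icc 1 T).filter (fun t => x t = a)).card))^2) := by
              rw [Real.sqrt_sq hnn]
          _ ≤ Real.sqrt ((Fintype.card X : ℝ) * T) := Real.sqrt_le_sqrt hcs
end

section
/- Let K ≥ 1 and γ ≥ 1 be natural numbers, let T_0, T_1, …, T_K be positive integers with ∑_{k=1}^{K} T_k = T, and let indices 1 = n_1 < n_2 < … < n_γ ≤ K be given, with the convention n_{γ+1} = K + 1. Assume that for every i ∈ {1, …, γ} and every k with n_i ≤ k ≤ n_{i+1} − 2, one has T_k = T_{k−1} + 1. Then K ≤ √(2 γ T). -/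
open Finset

lemma episode_interval_bound (Tl : ℕ → ℕ) (a b : ℕ) (ha : 1 ≤ a) (hab : a < b)
    (hgrow : ∀ k, a ≤ k → k ≤ b - 2 → Tl k = Tl (k - 1) + 1)
    (hpos : ∀ k, k ≤ b - 1 → 0 < Tl k) :
    (b - a) ^ 2 ≤ 2 * ∑ k ∈ Finset.Icc a (b - 1), Tl k := by
  have hstep : ∀ k, a ≤ k → k ≤ b - 2 → k - a + 2 ≤ Tl k := by
    intro k hk
    induction k, hk using Nat.le_induction with
    | base =>
      intro hb
      have h1 : Tl a = Tl (a - 1) + 1 := hgrow a le_rfl hb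
      have h2 : 0 < Tl (a - 1) := hpos _ (by omega)
      omega
    | succ k hk ih =>
      intro hb
      have h1 : Tl (k + 1) = Tl k + 1 := by
        have := hgrow (k + 1) (by omega) hb
        simpa using this
      have h2 := ih (by omega)
      omega
  rcases Nat.lt_or_ge (a + 1) b with h2 | h1
  · -- b ≥ a + 2
    have hb1 : b - 1 = (b - 2) + 1 := by omega
    have hsplit : ∑ k ∈ Finset.Icc a (b - 1), Tl k
        = ∑ k ∈ Finset.Icc a (b - 2), Tl k + Tl (b - 1) := by
      rw [hb1, Finset.sum_Icc_succ_top (by omega)]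
    have hlow : ∑ k ∈ Finset.Icc a (b - 2), (k - a + 2)
        ≤ ∑ k ∈ Finset.Icc a (b - 2), Tl k :=
      Finset.sum_le_sum fun k hk => by
        simp only [Finset.mem_Icc] at hk
        exact hstep k hk.1 hk.2
    have hgauss : ∑ k ∈ Finset.Icc a (b - 2), (k - a + 2)
        = ∑ i ∈ Finset.range (b - 1 - a), (i + 2) := by
      rw [show Finset.Icc a (b - 2) = Finset.Ico a (b - 1) by rw [show b - 1 = (b - 2) + 1 from by omega, Finset.Ico_add_one_right_eq_Icc]]
      rw [Finset.sum_Ico_eq_sum_range]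
      exact Finset.sum_congr rfl fun i _ => by omega
    have h2g : (∑ i ∈ Finset.range (b - 1 - a), (i + 2)) * 2
        = (b - 1 - a) * (b - 1 - a - 1) + 4 * (b - 1 - a) := by
      rw [Finset.sum_add_distrib, Nat.add_mul, Finset.sum_range_id_mul_two]
      simp [Finset.sum_const, Finset.card_range]; ring
    have hTb : 0 < Tl (b - 1) := hpos _ le_rfl
    obtain ⟨s, hs⟩ : ∃ s, b - 1 - a = s + 1 := ⟨b - 2 - a, by omega⟩
    have hd : b - a = s + 2 := by omega
    rw [hsplit, hd]
    have : (s + 1) * s + 4 * (s + 1) ≤ 2 * ∑ k ∈ Finset.Icc a (b - 2), Tl k := by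
      calc (s + 1) * s + 4 * (s + 1)
          = (b - 1 - a) * (b - 1 - a - 1) + 4 * (b - 1 - a) := by rw [hs]; simp
        _ = (∑ i ∈ Finset.range (b - 1 - a), (i + 2)) * 2 := h2g.symm
        _ = (∑ k ∈ Finset.Icc a (b - 2), (k - a + 2)) * 2 := by rw [hgauss]
        _ ≤ 2 * ∑ k ∈ Finset.Icc a (b - 2), Tl k := by omega
    nlinarith
  · -- b = a + 1
    have hb : b = a + 1 := by omega
    subst hb
    have h3 := hpos a (by omega)
    rw [show a + 1 - a = 1 from by omega, show a + 1 - 1 = a from by omega,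
      Finset.Icc_self, Finset.sum_singleton]
    omega

/-- Combinatorial core of the episode-count lemma: episode lengths grow by one
within each macro episode, so `K ≤ √(2 γ T)`. -/
theorem episode_count_core (K γ T : ℕ) (hK : 1 ≤ K) (hγ : 1 ≤ γ)
    (Tl : ℕ → ℕ) (hpos : ∀ k ≤ K, 0 < Tl k)
    (hsum : ∑ k ∈ Finset.Icc 1 K, Tl k = T)
    (n : ℕ → ℕ) (hn1 : n 1 = 1)
    (hmono : ∀ i, 1 ≤ i → i < γ → n i < n (i + 1))
    (hnγ : n γ ≤ K) (hnγ1 : n (γ + 1) = K + 1)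
    (hgrow : ∀ i, 1 ≤ i → i ≤ γ → ∀ k, n i ≤ k → k ≤ n (i + 1) - 2 →
      Tl k = Tl (k - 1) + 1) :
    (K : ℝ) ≤ Real.sqrt (2 * γ * T) := by
  -- strict growth of n on [1, γ]
  have hstep : ∀ i, 1 ≤ i → i ≤ γ → n i < n (i + 1) := by
    intro i h1 h2
    rcases eq_or_lt_of_le h2 with rfl | h
    · rw [hnγ1]; omega
    · exact hmono i h1 h
  have hmono' : ∀ i j, 1 ≤ i → i ≤ j → j ≤ γ + 1 → n i ≤ n j := by
    intro i j h1 hij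
    induction j, hij using Nat.le_induction with
    | base => intro _; exact le_rfl
    | succ j hj ih =>
      intro h
      have h2 := hstep j (by omega) (by omega)
      have h3 := ih (by omega)
      omega
  have hlow : ∀ i, 1 ≤ i → i ≤ γ + 1 → 1 ≤ n i := by
    intro i h1 h2
    have := hmono' 1 i le_rfl h1 h2
    omega
  have hhigh : ∀ i, 1 ≤ i → i ≤ γ + 1 → n i ≤ K + 1 := by
    intro i h1 h2
    have := hmono' i (γ + 1) h1 h2 le_rfl
    omega
  -- main induction
  have key : ∀ j, j ≤ γ →
      (∑ i ∈ Finset.Icc 1 j, (n (i + 1) - n i) ^ 2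
          ≤ 2 * ∑ k ∈ Finset.Icc 1 (n (j + 1) - 1), Tl k) ∧
      (∑ i ∈ Finset.Icc 1 j, (n (i + 1) - n i) = n (j + 1) - 1) := by
    intro j
    induction j with
    | zero => simp [hn1]
    | succ j ih =>
      intro hj
      obtain ⟨ih1, ih2⟩ := ih (by omega)
      set a := n (j + 1) with ha
      set b := n (j + 2) with hb
      have hab : a < b := hstep (j + 1) (by omega) hj
      have ha1 : 1 ≤ a := hlow (j + 1) (by omega) (by omega)
      have hbK : b ≤ K + 1 := hhigh (j + 2) (by omega) (by omega)
      have hsum1 : ∑ i ∈ Finset.Icc 1 (j + 1), (n (i + 1) - n i) ^ 2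
          = ∑ i ∈ Finset.Icc 1 j, (n (i + 1) - n i) ^ 2 + (b - a) ^ 2 := by
        rw [Finset.sum_Icc_succ_top (by omega)]
      have hsum2 : ∑ i ∈ Finset.Icc 1 (j + 1), (n (i + 1) - n i)
          = ∑ i ∈ Finset.Icc 1 j, (n (i + 1) - n i) + (b - a) := by
        rw [Finset.sum_Icc_succ_top (by omega)]
      have hIB : (b - a) ^ 2 ≤ 2 * ∑ k ∈ Finset.Icc a (b - 1), Tl k := by
        apply episode_interval_bound Tl a b ha1 hab
        · intro k hk1 hk2
          exact hgrow (j + 1) (by omega) hj k hk1 hk2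
        · intro k hk
          exact hpos k (by omega)
      have hsplit : ∑ k ∈ Finset.Icc 1 (a - 1), Tl k + ∑ k ∈ Finset.Icc a (b - 1), Tl k
          = ∑ k ∈ Finset.Icc 1 (b - 1), Tl k := by
        have e1 : Finset.Icc 1 (a - 1) = Finset.Ioc 0 (a - 1) := by
          rw [← Finset.Icc_add_one_left_eq_Ioc]; rfl
        have e2 : Finset.Icc a (b - 1) = Finset.Ioc (a - 1) (b - 1) := by
          rw [← Finset.Icc_add_one_left_eq_Ioc]; congr 1; omega
        have e3 : Finset.Icc 1 (b - 1) = Finset.Ioc 0 (b - 1) := by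
          rw [← Finset.Icc_add_one_left_eq_Ioc]; rfl
        rw [e1, e2, e3]
        exact Finset.sum_Ioc_consecutive _ (by omega) (by omega)
      refine ⟨?_, by omega⟩
      rw [hsum1]
      omega
  obtain ⟨k1, k2⟩ := key γ le_rfl
  rw [hnγ1] at k1 k2
  simp only [Nat.add_sub_cancel] at k1 k2
  rw [hsum] at k1
  -- Cauchy–Schwarz over ℕ
  have hCS : K ^ 2 ≤ γ * (2 * T) := by
    calc K ^ 2 = (∑ i ∈ Finset.Icc 1 γ, (n (i + 1) - n i)) ^ 2 := by rw [k2]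
      _ ≤ (Finset.Icc 1 γ).card * ∑ i ∈ Finset.Icc 1 γ, (n (i + 1) - n i) ^ 2 :=
          sq_sum_le_card_mul_sum_sq
      _ = γ * ∑ i ∈ Finset.Icc 1 γ, (n (i + 1) - n i) ^ 2 := by
          rw [Nat.card_Icc]; simp
      _ ≤ γ * (2 * T) := Nat.mul_le_mul_left _ k1
  rw [show (2 : ℝ) * γ * T = ((2 * γ * T : ℕ) : ℝ) by push_cast; ring]
  rw [Real.le_sqrt (Nat.cast_nonneg K) (Nat.cast_nonneg _)]
  have : (K : ℝ) ^ 2 = ((K ^ 2 : ℕ) : ℝ) := by push_cast; ring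
  rw [this]
  exact_mod_cast by linarith [hCS]
end

section
/- Let n ≥ 1 and T ≥ 2 be natural numbers, let K ≥ 1 be a natural number, and let T_0, T_1, …, T_K be positive integers with ∑_{k=1}^{K} T_k = T. Suppose there exist indices 1 = n_1 < n_2 < … < n_γ ≤ K (with the convention n_{γ+1} = K + 1) such that γ ≤ 2·n·log₂ T and such that for every i ∈ {1, …, γ} and every k with n_i ≤ k ≤ n_{i+1} − 2, one has T_k = T_{k−1} + 1. Then K ≤ 2·√(n · T · log₂ T). -/
open Finset

/-- Gauss-type sum used in the macro-episode lower bound. -/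
lemma two_sum_range_add_two (m : ℕ) :
    2 * ∑ d ∈ Finset.range m, (d + 2) = m * (m + 3) := by
  induction m with
  | zero => simp
  | succ m ih =>
    rw [Finset.sum_range_succ, Nat.mul_add, ih]
    ring

/-- Macro-episode lemma: if episode lengths increase by one within `[a, b-2]`,
then the total length over `[a, b)` is at least `(b-a)²/2`. -/
lemma macro_episode_bound (K : ℕ) (Tl : ℕ → ℕ) (hpos : ∀ k ≤ K, 0 < Tl k)
    (a b : ℕ) (ha : 1 ≤ a) (hab : a < b) (hbK : b ≤ K + 1)
    (hgrow : ∀ k, a ≤ k → k ≤ b - 2 → Tl k = Tl (k - 1) + 1) :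
    (b - a) ^ 2 ≤ 2 * ∑ k ∈ Finset.Ico a b, Tl k := by
  set L := b - a with hL
  have hL1 : 1 ≤ L := by omega
  -- key claim: Tl (a + d) ≥ d + 2 as long as a + d ≤ b - 2
  have claim : ∀ d, a + d ≤ b - 2 → d + 2 ≤ Tl (a + d) := by
    intro d
    induction d with
    | zero =>
      intro hd
      have h1 : Tl a = Tl (a - 1) + 1 := hgrow a le_rfl (by omega)
      have h2 : 0 < Tl (a - 1) := hpos (a - 1) (by omega)
      simpa [h1] using by omega
    | succ d ih =>
      intro hd
      have h1 : Tl (a + (d + 1)) = Tl (a + d) + 1 := by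
        have := hgrow (a + (d + 1)) (by omega) (by omega)
        simpa [show a + (d + 1) - 1 = a + d by omega] using this
      have h2 : d + 2 ≤ Tl (a + d) := ih (by omega)
      omega
  -- lower bound for the sum over Ico a (b-1)
  have hsum1 : ∑ d ∈ Finset.range (L - 1), (d + 2) ≤ ∑ k ∈ Finset.Ico a (b - 1), Tl k := by
    rw [Finset.sum_Ico_eq_sum_range, show b - 1 - a = L - 1 by omega]
    refine Finset.sum_le_sum fun d hd => ?_
    have hd' : d < L - 1 := Finset.mem_range.mp hd
    exact claim d (by omega)
  have hlast : 1 ≤ Tl (b - 1) := hpos (b - 1) (by omega)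
  have hsplit : ∑ k ∈ Finset.Ico a b, Tl k
      = ∑ k ∈ Finset.Ico a (b - 1), Tl k + Tl (b - 1) := by
    rw [show b = (b - 1) + 1 by omega, Finset.sum_Ico_succ_top (by omega : a ≤ b - 1)]
    congr 2 <;> omega
  have hgauss := two_sum_range_add_two (L - 1)
  -- combine
  have h2sum : (L - 1) * (L - 1 + 3) + 2 ≤ 2 * ∑ k ∈ Finset.Ico a b, Tl k := by
    rw [hsplit]
    calc (L - 1) * (L - 1 + 3) + 2
        = 2 * ∑ d ∈ Finset.range (L - 1), (d + 2) + 2 := by rw [hgauss]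
      _ ≤ 2 * ∑ k ∈ Finset.Ico a (b - 1), Tl k + 2 * Tl (b - 1) := by omega
      _ = 2 * (∑ k ∈ Finset.Ico a (b - 1), Tl k + Tl (b - 1)) := by ring
  have hLsq : L ^ 2 ≤ (L - 1) * (L - 1 + 3) + 2 := by
    have : L - 1 + 1 = L := by omega
    nlinarith [this]
  omega

/-- Episode-count lemma (abstract form of the bound on `K_T` for mmDPT-TS):
if `γ ≤ 2 n log₂ T` and episode lengths grow by one within each of the `γ`
macro episodes, then `K ≤ 2 √(n T log₂ T)`. -/
theorem episode_count_lemma (n T K : ℕ) (hn : 1 ≤ n) (hT : 2 ≤ T) (hK : 1 ≤ K)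
    (Tl : ℕ → ℕ) (hpos : ∀ k ≤ K, 0 < Tl k)
    (hsum : ∑ k ∈ Finset.Icc 1 K, Tl k = T)
    (hexists : ∃ (γ : ℕ) (ns : ℕ → ℕ), 1 ≤ γ ∧ ns 1 = 1 ∧
      (∀ i, 1 ≤ i → i < γ → ns i < ns (i + 1)) ∧ ns γ ≤ K ∧ ns (γ + 1) = K + 1 ∧
      ((γ : ℝ) ≤ 2 * n * Real.logb 2 T) ∧
      (∀ i, 1 ≤ i → i ≤ γ → ∀ k, ns i ≤ k → k ≤ ns (i + 1) - 2 →
        Tl k = Tl (k - 1) + 1)) :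
    (K : ℝ) ≤ 2 * Real.sqrt ((n : ℝ) * T * Real.logb 2 T) := by
  obtain ⟨γ, ns, hγ1, hns1, hnslt, hnsγ, hnsγ1, hγle, hgrow⟩ := hexists
  -- strict monotonicity over the whole range 1..γ
  have hlt : ∀ i, 1 ≤ i → i ≤ γ → ns i < ns (i + 1) := by
    intro i hi1 hiγ
    rcases lt_or_eq_of_le hiγ with h | h
    · exact hnslt i hi1 h
    · subst h; omega
  have hmono : ∀ i j, 1 ≤ i → i ≤ j → j ≤ γ + 1 → ns i ≤ ns j := by
    intro i j hi hij
    induction j, hij using Nat.le_induction with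
    | base => intro _; exact le_rfl
    | succ j hj ih =>
      intro hj1
      exact le_trans (ih (by omega)) (le_of_lt (hlt j (by omega) (by omega)))
  -- main induction: square decomposition and telescoping
  have hP : ∀ m, 1 ≤ m → m ≤ γ →
      (∑ i ∈ Finset.Icc 1 m, (ns (i + 1) - ns i) ^ 2
        ≤ 2 * ∑ k ∈ Finset.Ico (ns 1) (ns (m + 1)), Tl k)
      ∧ ∑ i ∈ Finset.Icc 1 m, (ns (i + 1) - ns i) = ns (m + 1) - ns 1 := by
    intro m hm
    induction m, hm using Nat.le_induction with
    | base =>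
      intro h1
      rw [show Finset.Icc 1 1 = {1} from rfl]
      simp only [Finset.sum_singleton]
      constructor
      · exact macro_episode_bound K Tl hpos (ns 1) (ns 2) (by omega)
          (hlt 1 le_rfl h1)
          (by have := hmono 2 (γ + 1) (by omega) (by omega) le_rfl; omega)
          (hgrow 1 le_rfl h1)
      · simp
    | succ m hm ih =>
      intro hmγ
      obtain ⟨ih1, ih2⟩ := ih (by omega)
      have h1m : ns 1 ≤ ns (m + 1) := hmono 1 (m + 1) le_rfl (by omega) (by omega)
      have hmm : ns (m + 1) < ns (m + 2) := hlt (m + 1) (by omega) hmγ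
      have hbK : ns (m + 2) ≤ K + 1 := by
        have := hmono (m + 2) (γ + 1) (by omega) (by omega) le_rfl; omega
      have hmacro := macro_episode_bound K Tl hpos (ns (m + 1)) (ns (m + 2))
        (by omega) hmm hbK (hgrow (m + 1) (by omega) hmγ)
      rw [Finset.sum_Icc_succ_top (by omega : 1 ≤ m + 1),
          Finset.sum_Icc_succ_top (by omega : 1 ≤ m + 1)]
      constructor
      · have hjoin : ∑ k ∈ Finset.Ico (ns 1) (ns (m + 1)), Tl k
            + ∑ k ∈ Finset.Ico (ns (m + 1)) (ns (m + 2)), Tl k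
            = ∑ k ∈ Finset.Ico (ns 1) (ns (m + 2)), Tl k :=
          Finset.sum_Ico_consecutive _ h1m (le_of_lt hmm)
      -- combine: sum of squares ≤ 2*(first part) + 2*(second part)
        calc ∑ i ∈ Finset.Icc 1 m, (ns (i + 1) - ns i) ^ 2 + (ns (m + 1 + 1) - ns (m + 1)) ^ 2
            ≤ 2 * ∑ k ∈ Finset.Ico (ns 1) (ns (m + 1)), Tl k
              + 2 * ∑ k ∈ Finset.Ico (ns (m + 1)) (ns (m + 2)), Tl k := by
              exact Nat.add_le_add ih1 hmacro
          _ = 2 * ∑ k ∈ Finset.Ico (ns 1) (ns (m + 2)), Tl k := by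
              rw [← hjoin]; ring
      · have he2 : m + 1 + 1 = m + 2 := rfl
        rw [he2, ih2]; omega
  obtain ⟨hsq, htel⟩ := hP γ hγ1 le_rfl
  -- rewrite the index interval
  have hIco : Finset.Ico (ns 1) (ns (γ + 1)) = Finset.Icc 1 K := by
    rw [hns1, hnsγ1, Finset.Ico_add_one_right_eq_Icc]
  rw [hIco, hsum] at hsq
  have hKsum : ∑ i ∈ Finset.Icc 1 γ, (ns (i + 1) - ns i) = K := by
    rw [htel, hns1, hnsγ1]; omega
  -- move to the reals and use Cauchy–Schwarz
  have hlogpos : (0:ℝ) < Real.logb 2 T := by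
    apply Real.logb_pos (by norm_num)
    exact_mod_cast by omega
  have hCS : ((K : ℝ)) ^ 2 ≤ (γ : ℝ) * (2 * T) := by
    have h1 : ((K : ℝ)) = ∑ i ∈ Finset.Icc 1 γ, ((ns (i + 1) - ns i : ℕ) : ℝ) := by
      rw [← Nat.cast_sum, hKsum]
    have h2 : (∑ i ∈ Finset.Icc 1 γ, ((ns (i + 1) - ns i : ℕ) : ℝ)) ^ 2
        ≤ (Finset.Icc 1 γ).card * ∑ i ∈ Finset.Icc 1 γ, ((ns (i + 1) - ns i : ℕ) : ℝ) ^ 2 :=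
      sq_sum_le_card_mul_sum_sq
    have h3 : ∑ i ∈ Finset.Icc 1 γ, ((ns (i + 1) - ns i : ℕ) : ℝ) ^ 2 ≤ 2 * T := by
      have : (↑(∑ i ∈ Finset.Icc 1 γ, (ns (i + 1) - ns i) ^ 2) : ℝ) ≤ ((2 * T : ℕ) : ℝ) := by
        exact_mod_cast hsq
      push_cast at this
      exact this
    have hcard : ((Finset.Icc 1 γ).card : ℝ) = γ := by
      rw [Nat.card_Icc]; simp
    calc ((K : ℝ)) ^ 2 ≤ (Finset.Icc 1 γ).card * ∑ i ∈ Finset.Icc 1 γ,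
          ((ns (i + 1) - ns i : ℕ) : ℝ) ^ 2 := by rw [h1]; exact h2
      _ ≤ ((Finset.Icc 1 γ).card : ℝ) * (2 * T) := by
          apply mul_le_mul_of_nonneg_left h3 (Nat.cast_nonneg _)
      _ = (γ : ℝ) * (2 * T) := by rw [hcard]
  have hfinal : ((K : ℝ)) ^ 2 ≤ 4 * ((n : ℝ) * T * Real.logb 2 T) := by
    have hT0 : (0:ℝ) ≤ 2 * T := by positivity
    calc ((K : ℝ)) ^ 2 ≤ (γ : ℝ) * (2 * T) := hCS
      _ ≤ (2 * n * Real.logb 2 T) * (2 * T) := by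
          apply mul_le_mul_of_nonneg_right hγle hT0
      _ = 4 * ((n : ℝ) * T * Real.logb 2 T) := by ring
  have hXnn : (0:ℝ) ≤ (n : ℝ) * T * Real.logb 2 T := by positivity
  have := Real.sqrt_le_sqrt hfinal
  rw [Real.sqrt_sq (by positivity : (0:ℝ) ≤ (K:ℝ))] at this
  calc (K : ℝ) ≤ Real.sqrt (4 * ((n : ℝ) * T * Real.logb 2 T)) := this
    _ = 2 * Real.sqrt ((n : ℝ) * T * Real.logb 2 T) := by
        rw [show (4:ℝ) = 2 ^ 2 by norm_num, Real.sqrt_mul (by positivity),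
          Real.sqrt_sq (by norm_num : (0:ℝ) ≤ 2)]
end
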